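/- For a classical-quantum state ρ_XB with binary classical register X, H_max(X|B) ≤ log(1 + √(1 − (2 p_guess(X|B) − 1)²)), where p_guess(X|B) is the optimal probability of guessing X from measuring B. -/

import Mathlib

open ComplexOrder

/-- The positive semidefinite square root of a positive semidefinite matrix
(the definition `Matrix.PosSemidef.sqrt` of the older Mathlib, removed since). -/
noncomputable def Matrix.PosSemidef.sqrt {𝕜 : Type*} [RCLike 𝕜] {n : Type*} [Fintype n]
    [DecidableEq n] {A : Matrix n n 𝕜} (hA : A.PosSemidef) : Matrix n n 𝕜 :=
  (hA.1.eigenvectorUnitary : Matrix n n 𝕜) *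
    Matrix.diagonal ((↑) ∘ (√·) ∘ hA.1.eigenvalues) *
    (star hA.1.eigenvectorUnitary : Matrix n n 𝕜)

/-- Trace norm ‖A‖₁ = Tr √(AᴴA). -/
noncomputable def traceNorm {n : Type*} [Fintype n] [DecidableEq n]
    (A : Matrix n n ℂ) : ℝ :=
  ((Matrix.posSemidef_conjTranspose_mul_self A).sqrt.trace).re

namespace HmaxAux

open Matrix

variable {n : Type*} [Fintype n] [DecidableEq n]

section cfc
variable {D : Matrix n n ℂ} (hD : D.IsHermitian)

lemma star_mul_selfU : star (hD.eigenvectorUnitary : Matrix n n ℂ) * hD.eigenvectorUnitary = 1 :=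
  Matrix.mem_unitaryGroup_iff'.mp hD.eigenvectorUnitary.2

lemma mul_star_selfU : (hD.eigenvectorUnitary : Matrix n n ℂ) * star (hD.eigenvectorUnitary : Matrix n n ℂ) = 1 :=
  Matrix.mem_unitaryGroup_iff.mp hD.eigenvectorUnitary.2

lemma diag_congr {f g : ℝ → ℝ} (h : ∀ x, f x = g x) :
    (diagonal (RCLike.ofReal ∘ f ∘ hD.eigenvalues) : Matrix n n ℂ)
      = diagonal (RCLike.ofReal ∘ g ∘ hD.eigenvalues) :=
  Matrix.diagonal_eq_diagonal_iff.mpr fun i => by simp [Function.comp, h _]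

lemma cfc_congr {f g : ℝ → ℝ} (h : ∀ x, f x = g x) : hD.cfc f = hD.cfc g := by
  rw [Matrix.IsHermitian.cfc, Matrix.IsHermitian.cfc, diag_congr hD h]

lemma cfc_mul (f g : ℝ → ℝ) : hD.cfc f * hD.cfc g = hD.cfc (fun x => f x * g x) := by
  rw [Matrix.IsHermitian.cfc, Matrix.IsHermitian.cfc, Matrix.IsHermitian.cfc]
  have h : ∀ (a b c d e f : Matrix n n ℂ), (a * b * c) * (d * e * f) = a * (b * (c * d) * e) * f := by
    intros; simp only [mul_assoc]
  rw [← map_mul, diagonal_mul_diagonal]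
  congr 1
  exact Matrix.diagonal_eq_diagonal_iff.mpr fun i => by simp

lemma cfc_herm (f : ℝ → ℝ) : (hD.cfc f).IsHermitian := by
  rw [Matrix.IsHermitian.cfc]
  have hd : (diagonal (RCLike.ofReal ∘ f ∘ hD.eigenvalues) : Matrix n n ℂ).IsHermitian := by
    rw [Matrix.IsHermitian, Matrix.diagonal_conjTranspose]
    exact Matrix.diagonal_eq_diagonal_iff.mpr fun i => by simp [Pi.star_def, Function.comp]
  simpa [Matrix.star_eq_conjTranspose] using
    (Matrix.isHermitian_mul_mul_conjTranspose (hD.eigenvectorUnitary : Matrix n n ℂ) hd)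

lemma cfc_psd {f : ℝ → ℝ} (hf : ∀ x, 0 ≤ f x) : (hD.cfc f).PosSemidef := by
  rw [Matrix.IsHermitian.cfc]
  have hd : (diagonal (RCLike.ofReal ∘ f ∘ hD.eigenvalues) : Matrix n n ℂ).PosSemidef := by
    refine Matrix.posSemidef_diagonal_iff.mpr fun i => ?_
    simpa using Complex.zero_le_real.mpr (hf _)
  simpa [Matrix.star_eq_conjTranspose] using
    hd.mul_mul_conjTranspose_same (hD.eigenvectorUnitary : Matrix n n ℂ)

lemma cfc_trace (f : ℝ → ℝ) : (hD.cfc f).trace = ∑ i, (f (hD.eigenvalues i) : ℂ) := by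
  rw [Matrix.IsHermitian.cfc, Unitary.conjStarAlgAut_apply, Matrix.trace_mul_cycle,
    Unitary.coe_star_mul_self, one_mul,
    Matrix.trace_diagonal]
  simp

lemma cfc_id : hD.cfc (fun x => x) = D := by
  rw [Matrix.IsHermitian.cfc]
  exact (hD.spectral_theorem).symm

lemma cfc_one : hD.cfc (fun _ => 1) = 1 := by
  rw [Matrix.IsHermitian.cfc]
  have hd : (diagonal (RCLike.ofReal ∘ (fun _ : ℝ => (1:ℝ)) ∘ hD.eigenvalues) : Matrix n n ℂ) = 1 := by
    rw [← Matrix.diagonal_one]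
    exact Matrix.diagonal_eq_diagonal_iff.mpr fun i => by simp
  rw [hd, map_one]

lemma cfc_add (f g : ℝ → ℝ) : hD.cfc f + hD.cfc g = hD.cfc (fun x => f x + g x) := by
  rw [Matrix.IsHermitian.cfc, Matrix.IsHermitian.cfc, Matrix.IsHermitian.cfc,
    ← map_add]
  congr 1
  rw [Matrix.diagonal_add]
  exact Matrix.diagonal_eq_diagonal_iff.mpr fun i => by simp

lemma cfc_sub (f g : ℝ → ℝ) : hD.cfc f - hD.cfc g = hD.cfc (fun x => f x - g x) := by
  rw [Matrix.IsHermitian.cfc, Matrix.IsHermitian.cfc, Matrix.IsHermitian.cfc,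
    ← map_sub]
  congr 1
  rw [Matrix.diagonal_sub]
  exact Matrix.diagonal_eq_diagonal_iff.mpr fun i => by simp

end cfc

open scoped MatrixOrder in
lemma _root_.Matrix.PosSemidef.sqrt_eq_CFC_sqrt {M : Matrix n n ℂ} (hM : M.PosSemidef) :
    hM.sqrt = CFC.sqrt M := by
  rw [CFC.sqrt_eq_real_sqrt M hM.nonneg, cfcₙ_eq_cfc, hM.1.cfc_eq]
  rfl

open scoped MatrixOrder in
lemma _root_.Matrix.PosSemidef.posSemidef_sqrt {M : Matrix n n ℂ} (hM : M.PosSemidef) :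
    hM.sqrt.PosSemidef := by
  rw [hM.sqrt_eq_CFC_sqrt]
  exact (CFC.sqrt_nonneg M).posSemidef

open scoped MatrixOrder in
lemma _root_.Matrix.PosSemidef.sqrt_mul_self {M : Matrix n n ℂ} (hM : M.PosSemidef) :
    hM.sqrt * hM.sqrt = M := by
  rw [hM.sqrt_eq_CFC_sqrt]
  exact CFC.sqrt_mul_sqrt_self M hM.nonneg

open scoped MatrixOrder in
lemma _root_.Matrix.PosSemidef.eq_sqrt_of_sq_eq {A : Matrix n n ℂ} (hA : A.PosSemidef)
    {B : Matrix n n ℂ} (hB : B.PosSemidef) (hAB : A ^ 2 = B) : A = hB.sqrt := by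
  rw [hB.sqrt_eq_CFC_sqrt]
  exact (CFC.sqrt_unique (by rw [← sq]; exact hAB) hA.nonneg).symm

section facts

lemma psd_diag_re_nonneg {M : Matrix n n ℂ} (hM : M.PosSemidef) (i : n) : 0 ≤ (M i i).re := by
  simpa using (Complex.le_def.mp (hM.diag_nonneg (i := i))).1

lemma psd_trace_re_nonneg {M : Matrix n n ℂ} (hM : M.PosSemidef) : 0 ≤ M.trace.re := by
  rw [Matrix.trace, Complex.re_sum]
  exact Finset.sum_nonneg fun i _ => psd_diag_re_nonneg hM i

lemma trace_mul_psd_nonneg {M N : Matrix n n ℂ} (hM : M.PosSemidef) (hN : N.PosSemidef) :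
    0 ≤ (M * N).trace.re := by
  have h1 : M * N = M * hN.sqrt * hN.sqrt := by rw [mul_assoc, hN.sqrt_mul_self]
  have h2 : (M * hN.sqrt * hN.sqrt).trace = (hN.sqrt * M * hN.sqrt).trace := by
    rw [Matrix.trace_mul_cycle]
  have h3 : (hN.sqrt * M * hN.sqrt).PosSemidef := by
    have := hM.mul_mul_conjTranspose_same hN.sqrt
    rwa [hN.posSemidef_sqrt.1.eq] at this
  rw [h1, h2]
  exact psd_trace_re_nonneg h3

/-- Sign matrix for a Hermitian matrix. -/
lemma sign_exists {D : Matrix n n ℂ} (hD : D.IsHermitian) :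
    ∃ S : Matrix n n ℂ, S.IsHermitian ∧ (1 - S * S).PosSemidef ∧ (1 - S).PosSemidef ∧
      (1 + S).PosSemidef ∧ (S * D).trace.re = traceNorm D := by
  classical
  set sgn : ℝ → ℝ := fun x => if x < 0 then -1 else 1 with hsgn
  refine ⟨hD.cfc sgn, cfc_herm hD sgn, ?_, ?_, ?_, ?_⟩
  · rw [cfc_mul hD]
    have h1 : (1 : Matrix n n ℂ) = hD.cfc (fun _ => 1) := (cfc_one hD).symm
    rw [h1, cfc_sub hD]
    refine cfc_psd hD fun x => ?_
    by_cases hx : x < 0 <;> simp [hsgn, hx]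
  · have h1 : (1 : Matrix n n ℂ) = hD.cfc (fun _ => 1) := (cfc_one hD).symm
    rw [h1, cfc_sub hD]
    refine cfc_psd hD fun x => ?_
    by_cases hx : x < 0 <;> simp [hsgn, hx]
  · have h1 : (1 : Matrix n n ℂ) = hD.cfc (fun _ => 1) := (cfc_one hD).symm
    rw [h1, cfc_add hD]
    refine cfc_psd hD fun x => ?_
    by_cases hx : x < 0 <;> simp [hsgn, hx]
  · have hsqrt : hD.cfc (fun x => |x|) = (Matrix.posSemidef_conjTranspose_mul_self D).sqrt := by
      refine Matrix.PosSemidef.eq_sqrt_of_sq_eq (cfc_psd hD fun x => abs_nonneg x) _ ?_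
      rw [pow_two, cfc_mul hD,
        cfc_congr hD (g := fun x => x * x) (fun x => by rw [abs_mul_abs_self]),
        ← cfc_mul hD, cfc_id hD, hD.eq]
    have hSD : hD.cfc sgn * hD.cfc (fun x => x) = hD.cfc (fun x => |x|) := by
      rw [cfc_mul hD]
      refine cfc_congr hD fun x => ?_
      by_cases hx : x < 0
      · simp [hsgn, hx, abs_of_neg hx]
      · simp [hsgn, hx, abs_of_nonneg (not_lt.mp hx)]
    rw [cfc_id hD] at hSD
    rw [hSD, hsqrt, traceNorm]

/-- Approximate polar decomposition. -/
lemma polar_exists (K : Matrix n n ℂ) :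
    ∃ M Q : Matrix n n ℂ, M * Mᴴ = Q ∧ (1 - Q).PosSemidef ∧
      (K * M).trace = (Matrix.posSemidef_conjTranspose_mul_self K).sqrt.trace := by
  classical
  set hP : (Kᴴ * K).PosSemidef := Matrix.posSemidef_conjTranspose_mul_self K with hPdef
  set P : Matrix n n ℂ := hP.sqrt with hPs
  have hPpsd : P.PosSemidef := hP.posSemidef_sqrt
  have hPh : P.IsHermitian := hPpsd.1
  have hidP : hPh.cfc (fun x => x) = P := cfc_id hPh
  have hPP : P * P = Kᴴ * K := hP.sqrt_mul_self
  set pinv : ℝ → ℝ := fun x => if x = 0 then 0 else x⁻¹ with hpinv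
  set ind : ℝ → ℝ := fun x => if x = 0 then 0 else 1 with hind
  refine ⟨hPh.cfc pinv * Kᴴ, hPh.cfc ind, ?_, ?_, ?_⟩
  · have h1 : (hPh.cfc pinv * Kᴴ) * (hPh.cfc pinv * Kᴴ)ᴴ
        = hPh.cfc pinv * (Kᴴ * K) * hPh.cfc pinv := by
      rw [Matrix.conjTranspose_mul, Matrix.conjTranspose_conjTranspose,
        (cfc_herm hPh pinv).eq]
      simp only [mul_assoc]
    have e3 : hPh.cfc pinv * (hPh.cfc (fun x => x) * hPh.cfc (fun x => x)) * hPh.cfc pinv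
        = hPh.cfc ind := by
      rw [cfc_mul hPh, cfc_mul hPh, cfc_mul hPh]
      refine cfc_congr hPh fun x => ?_
      by_cases hx : x = 0
      · simp [hpinv, hind, hx]
      · simp only [hpinv, hind, hx, if_false]; field_simp
    rw [cfc_id hPh] at e3
    rw [h1, ← hPP]
    rw [show hPh.cfc pinv * (P * P) * hPh.cfc pinv
        = hPh.cfc pinv * (P * P) * hPh.cfc pinv from rfl] at e3 ⊢
    exact e3
  · have h1 : (1 : Matrix n n ℂ) = hPh.cfc (fun _ => 1) := (cfc_one hPh).symm
    rw [h1, cfc_sub hPh]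
    refine cfc_psd hPh fun x => ?_
    by_cases hx : x = 0 <;> simp [hind, hx]
  · have h1 : K * (hPh.cfc pinv * Kᴴ) = K * hPh.cfc pinv * Kᴴ := (mul_assoc _ _ _).symm
    have e2 : hPh.cfc pinv * (hPh.cfc (fun x => x) * hPh.cfc (fun x => x))
        = hPh.cfc (fun x => x) := by
      rw [cfc_mul hPh, cfc_mul hPh]
      refine cfc_congr hPh fun x => ?_
      by_cases hx : x = 0
      · simp [hpinv, hx]
      · simp only [hpinv, hx, if_false]; field_simp
    rw [cfc_id hPh] at e2
    rw [h1, Matrix.trace_mul_cycle, ← hPP, Matrix.trace_mul_comm, e2]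

end facts

section euclid

noncomputable def toE (X : Matrix n n ℂ) : EuclideanSpace ℂ (n × n) :=
  WithLp.toLp 2 (fun p : n × n => X p.1 p.2)

lemma toE_inner (X Y : Matrix n n ℂ) :
    (inner ℂ (toE X) (toE Y) : ℂ) = (Xᴴ * Y).trace := by
  simp only [toE, PiLp.inner_apply, RCLike.inner_apply, Matrix.trace, Matrix.diag,
    Matrix.mul_apply, Matrix.conjTranspose_apply, starRingEnd_apply]
  rw [Fintype.sum_prod_type]
  rw [Finset.sum_comm]
  exact Finset.sum_congr rfl fun _ _ => Finset.sum_congr rfl fun _ _ => mul_comm _ _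

lemma toE_norm_sq (X : Matrix n n ℂ) : ‖toE X‖ ^ 2 = ((Xᴴ * X).trace).re := by
  have h := inner_self_eq_norm_sq (𝕜 := ℂ) (toE X)
  rw [toE_inner] at h
  exact h.symm

lemma toE_mul_contraction {S : Matrix n n ℂ} (hSh : S.IsHermitian)
    (hcon : (1 - S * S).PosSemidef) (X : Matrix n n ℂ) :
    ‖toE (S * X)‖ ≤ ‖toE X‖ := by
  have hpsd : (Xᴴ * (1 - S * S) * X).PosSemidef := by
    have := hcon.mul_mul_conjTranspose_same Xᴴ
    rwa [Matrix.conjTranspose_conjTranspose] at this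
  have hexp : Xᴴ * (1 - S * S) * X = Xᴴ * X - (S * X)ᴴ * (S * X) := by
    rw [Matrix.conjTranspose_mul, hSh.eq]
    noncomm_ring
  have h0 := psd_trace_re_nonneg hpsd
  rw [hexp, Matrix.trace_sub, Complex.sub_re] at h0
  have h2 : ‖toE (S * X)‖ ^ 2 ≤ ‖toE X‖ ^ 2 := by
    rw [toE_norm_sq, toE_norm_sq]; linarith
  have := norm_nonneg (toE (S * X))
  have := norm_nonneg (toE X)
  nlinarith

lemma trace_re_symm (X Y : Matrix n n ℂ) : ((Xᴴ * Y).trace).re = ((Yᴴ * X).trace).re := by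
  have h : Yᴴ * X = (Xᴴ * Y)ᴴ := by
    rw [Matrix.conjTranspose_mul, Matrix.conjTranspose_conjTranspose]
  rw [h, Matrix.trace_conjTranspose]
  exact (Complex.conj_re _)

lemma trace_re_cross {S : Matrix n n ℂ} (hSh : S.IsHermitian) (X Y : Matrix n n ℂ) :
    ((Xᴴ * (S * Y)).trace).re = ((Yᴴ * (S * X)).trace).re := by
  rw [trace_re_symm]
  have h : (S * Y)ᴴ * X = Yᴴ * (S * X) := by
    rw [Matrix.conjTranspose_mul, hSh.eq, mul_assoc]
  rw [h]

end euclid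

lemma real_arith {T F p q q' a b : ℝ} (hT0 : 0 ≤ T) (hF0 : 0 ≤ F) (hp0 : 0 ≤ p)
    (hq'0 : 0 ≤ q') (hpq : p + q = 1) (hq'q : q' ≤ q) (ha0 : 0 ≤ a) (hb0 : 0 ≤ b)
    (ha2 : a ^ 2 = p + q' + 2 * F) (hb2 : b ^ 2 = p + q' - 2 * F) (hFpq : F ^ 2 ≤ p * q')
    (key : T ≤ a * b + (q - q')) :
    Real.logb 2 (1 + 2 * F) ≤ Real.logb 2 (1 + Real.sqrt (1 - T ^ 2)) := by
  have hs1 : p + q' ≤ 1 := by linarith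
  have hab2 : (a * b) ^ 2 = (p + q') ^ 2 - (2 * F) ^ 2 := by
    rw [mul_pow, ha2, hb2]; ring
  have hab0 : 0 ≤ a * b := mul_nonneg ha0 hb0
  have habs : a * b ≤ p + q' := by nlinarith [hab2, hab0, hq'0, hp0, hFpq]
  have key' : T ≤ a * b + (1 - (p + q')) := by linarith
  have hT2 : T ^ 2 ≤ 1 - (2 * F) ^ 2 := by
    have h5 : T ^ 2 ≤ (a * b + (1 - (p + q'))) ^ 2 := by nlinarith [key', hT0, hab0]
    nlinarith [h5, hab2, habs, hs1, hab0,
      mul_le_mul_of_nonneg_right habs (by linarith : (0:ℝ) ≤ 1 - (p + q'))]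
  have h1T : 0 ≤ 1 - T ^ 2 := by nlinarith [hF0]
  have h2F : 2 * F ≤ Real.sqrt (1 - T ^ 2) :=
    (Real.le_sqrt (by linarith) h1T).mpr (by nlinarith [hT2])
  exact Real.logb_le_logb_of_le one_lt_two (by linarith) (by linarith)

end HmaxAux

open scoped Matrix in
open HmaxAux in
/-- H_max(X|B) ≤ log₂(1 + √(1 − (2 p_guess(X|B) − 1)²)) for a binary cq state. -/
theorem hmax_le_of_pguess
    {n : Type*} [Fintype n] [DecidableEq n]
    (σ₀ σ₁ : Matrix n n ℂ) (h₀ : σ₀.PosSemidef) (h₁ : σ₁.PosSemidef)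
    (htr : σ₀.trace + σ₁.trace = 1) :
    Real.logb 2 (1 + 2 * traceNorm (h₀.sqrt * h₁.sqrt))
      ≤ Real.logb 2 (1 + Real.sqrt
          (1 - (2 * (1 / 2 + traceNorm (σ₀ - σ₁) / 2) - 1) ^ 2)) := by
  classical
  set A := h₀.sqrt with hAdef
  set B := h₁.sqrt with hBdef
  have hAh : A.IsHermitian := h₀.posSemidef_sqrt.1
  have hBh : B.IsHermitian := h₁.posSemidef_sqrt.1
  have hAA : A * A = σ₀ := h₀.sqrt_mul_self
  have hBB : B * B = σ₁ := h₁.sqrt_mul_self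
  set K := A * B with hKdef
  set F := traceNorm K with hFdef
  set T := traceNorm (σ₀ - σ₁) with hTdef
  obtain ⟨S, hSh, hScon, hS1, hS2, hST⟩ := sign_exists (h₀.1.sub h₁.1)
  obtain ⟨M, Q, hMQ, hQ1, hKM⟩ := polar_exists K
  set φ := B * M with hφdef
  set p := σ₀.trace.re with hpdef
  set q := σ₁.trace.re with hqdef
  set q' := (B * Q * B).trace.re with hq'def
  have hpq : p + q = 1 := by
    have := congrArg Complex.re htr
    simpa [Complex.add_re] using this
  have hp0 : 0 ≤ p := psd_trace_re_nonneg h₀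
  have hQpsd : Q.PosSemidef := hMQ ▸ Matrix.posSemidef_self_mul_conjTranspose M
  have hBQB : (B * Q * B).PosSemidef := by
    have := hQpsd.mul_mul_conjTranspose_same B
    rwa [hBh.eq] at this
  have hq'0 : 0 ≤ q' := psd_trace_re_nonneg hBQB
  have h1QB : (B * (1 - Q) * B).PosSemidef := by
    have := hQ1.mul_mul_conjTranspose_same B
    rwa [hBh.eq] at this
  have hsplit : B * (1 - Q) * B = σ₁ - B * Q * B := by
    rw [← hBB]; noncomm_ring
  have hq'q : q' ≤ q := by
    have h := psd_trace_re_nonneg h1QB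
    rw [hsplit, Matrix.trace_sub, Complex.sub_re] at h
    linarith
  have hT0 : 0 ≤ T :=
    psd_trace_re_nonneg (Matrix.posSemidef_conjTranspose_mul_self (σ₀ - σ₁)).posSemidef_sqrt
  have hF0 : 0 ≤ F :=
    psd_trace_re_nonneg (Matrix.posSemidef_conjTranspose_mul_self K).posSemidef_sqrt
  have hφφ : φ * φᴴ = B * Q * B := by
    rw [hφdef, Matrix.conjTranspose_mul, hBh.eq, ← hMQ]
    noncomm_ring
  -- the overlap
  have hc : ((Aᴴ * φ).trace).re = F := by
    rw [hAh.eq, hφdef, ← mul_assoc, ← hKdef, hKM]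
    rfl
  -- norms
  have hnA : ((Aᴴ * A).trace).re = p := by rw [hAh.eq, hAA]
  have hnφ : ((φᴴ * φ).trace).re = q' := by
    rw [Matrix.trace_mul_comm, hφφ]
  have hcross : ((φᴴ * A).trace).re = F := by
    rw [trace_re_symm]; exact hc
  have hplus : ‖toE (A + φ)‖ ^ 2 = p + q' + 2 * F := by
    rw [toE_norm_sq]
    have : (A + φ)ᴴ * (A + φ) = Aᴴ * A + Aᴴ * φ + (φᴴ * A + φᴴ * φ) := by
      rw [Matrix.conjTranspose_add]; noncomm_ring
    rw [this]
    simp only [Matrix.trace_add, Complex.add_re]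
    rw [hnA, hnφ, hc, hcross]; ring
  have hminus : ‖toE (A - φ)‖ ^ 2 = p + q' - 2 * F := by
    rw [toE_norm_sq]
    have : (A - φ)ᴴ * (A - φ) = Aᴴ * A - Aᴴ * φ - (φᴴ * A - φᴴ * φ) := by
      rw [Matrix.conjTranspose_sub]; noncomm_ring
    rw [this]
    simp only [Matrix.trace_sub, Complex.sub_re]
    rw [hnA, hnφ, hc, hcross]; ring
  -- Cauchy-Schwarz for the overlap
  have hFpq : F ≤ ‖toE A‖ * ‖toE φ‖ := by
    have h1 : F = RCLike.re (inner (𝕜 := ℂ) (toE A) (toE φ)) := by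
      rw [toE_inner]; exact hc.symm
    rw [h1]
    exact re_inner_le_norm _ _
  have hnA' : ‖toE A‖ ^ 2 = p := by rw [toE_norm_sq, hnA]
  have hnφ' : ‖toE φ‖ ^ 2 = q' := by rw [toE_norm_sq, hnφ]
  -- the main estimate
  have hTsplit : T = ((S * σ₀).trace).re - ((S * (B * Q * B)).trace).re
      - ((S * (B * (1 - Q) * B)).trace).re := by
    rw [← hTdef] at hST
    rw [← hST]
    have : S * (σ₀ - σ₁) = S * σ₀ - S * (B * Q * B) - S * (B * (1 - Q) * B) := by
      rw [hsplit]; noncomm_ring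
    rw [this]
    simp only [Matrix.trace_sub, Complex.sub_re]
  have hE1 : ((S * (B * (1 - Q) * B)).trace).re ≥ -(q - q') := by
    have h := trace_mul_psd_nonneg hS2 h1QB
    have : (1 + S) * (B * (1 - Q) * B) = B * (1 - Q) * B + S * (B * (1 - Q) * B) := by
      noncomm_ring
    rw [this, Matrix.trace_add, Complex.add_re] at h
    have h2 : ((B * (1 - Q) * B).trace).re = q - q' := by
      rw [hsplit, Matrix.trace_sub, Complex.sub_re]
    rw [h2] at h
    linarith
  have hmid : ((S * σ₀).trace).re - ((S * (B * Q * B)).trace).re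
      = RCLike.re (inner (𝕜 := ℂ) (toE (A + φ)) (toE (S * (A - φ)))) := by
    rw [toE_inner]
    have hexp : (A + φ)ᴴ * (S * (A - φ))
        = Aᴴ * (S * A) - Aᴴ * (S * φ) + (φᴴ * (S * A) - φᴴ * (S * φ)) := by
      rw [Matrix.conjTranspose_add]; noncomm_ring
    rw [hexp]
    simp only [Matrix.trace_add, Matrix.trace_sub]
    have e1 : ((Aᴴ * (S * A)).trace) = ((S * σ₀).trace) := by
      rw [Matrix.trace_mul_comm, mul_assoc, hAh.eq, hAA]
    have e2 : ((φᴴ * (S * φ)).trace) = ((S * (B * Q * B)).trace) := by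
      rw [Matrix.trace_mul_comm, mul_assoc, ← hφφ]
    have e3 : ((φᴴ * (S * A)).trace).re = ((Aᴴ * (S * φ)).trace).re :=
      trace_re_cross hSh φ A
    rw [e1, e2]
    simp only [map_add, map_sub, RCLike.re_to_complex]
    rw [e3]
    ring
  have hCS : RCLike.re (inner (𝕜 := ℂ) (toE (A + φ)) (toE (S * (A - φ))))
      ≤ ‖toE (A + φ)‖ * ‖toE (A - φ)‖ := by
    refine le_trans (re_inner_le_norm _ _) ?_
    exact mul_le_mul_of_nonneg_left (toE_mul_contraction hSh hScon _) (norm_nonneg _)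
  have key : T ≤ ‖toE (A + φ)‖ * ‖toE (A - φ)‖ + (q - q') := by
    rw [hTsplit, hmid]
    linarith [hCS, hE1]
  have hFpq2 : F ^ 2 ≤ p * q' := by
    have h2 : (‖toE A‖ * ‖toE φ‖) ^ 2 = p * q' := by
      rw [mul_pow, hnA', hnφ']
    nlinarith [hFpq, hF0, norm_nonneg (toE A), norm_nonneg (toE φ), mul_nonneg (norm_nonneg (toE A)) (norm_nonneg (toE φ))]
  have e : (2 * (1 / 2 + T / 2) - 1 : ℝ) = T := by ring
  rw [e]
  exact real_arith hT0 hF0 hp0 hq'0 hpq hq'q (norm_nonneg _) (norm_nonneg _)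
    hplus hminus hFpq2 key
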